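/- The representation RMCR := MFCR ∪ MMCR exactly characterizes membership in MCR: for every pattern X ⊆ ℐ, X ∈ MCR if and only if there exist J ∈ RMCR and Z ∈ RMCR with J ⊆ X ⊆ Z. -/
import Mathlib


open Finset

variable {τ ι : Type*} [DecidableEq ι]

/-- Conjunctive support: number of transactions containing the whole pattern. -/
def suppConj (T : Finset τ) (items : τ → Finset ι) (X : Finset ι) : ℕ :=
  (T.filter fun t => X ⊆ items t).card

/-- Disjunctive support: number of transactions containing at least one item of the pattern. -/
def suppDisj (T : Finset τ) (items : τ → Finset ι) (X : Finset ι) : ℕ :=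
  (T.filter fun t => (X ∩ items t).Nonempty).card

/-- The bond measure (division by zero in `ℚ` yields `0`, matching the convention). -/
def bond (T : Finset τ) (items : τ → Finset ι) (X : Finset ι) : ℚ :=
  (suppConj T items X : ℚ) / (suppDisj T items X : ℚ)

/-- Correlated rare patterns. -/
def MCR (T : Finset τ) (items : τ → Finset ι) (I : Finset ι) (minsupp : ℕ) (minbond : ℚ) :
    Set (Finset ι) :=
  {X | X ⊆ I ∧ minbond ≤ bond T items X ∧ suppConj T items X < minsupp}

/-- Closed correlated rare patterns: no strict superset (within the item set)
has the same bond value. -/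
def MFCR (T : Finset τ) (items : τ → Finset ι) (I : Finset ι) (minsupp : ℕ) (minbond : ℚ) :
    Set (Finset ι) :=
  {X | X ∈ MCR T items I minsupp minbond ∧
    ∀ Y : Finset ι, X ⊂ Y → Y ⊆ I → bond T items Y ≠ bond T items X}

/-- Minimal correlated rare patterns: no strict subset has the same bond value. -/
def MMCR (T : Finset τ) (items : τ → Finset ι) (I : Finset ι) (minsupp : ℕ) (minbond : ℚ) :
    Set (Finset ι) :=
  {X | X ∈ MCR T items I minsupp minbond ∧
    ∀ Y : Finset ι, Y ⊂ X → bond T items Y ≠ bond T items X}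

/-- The exact concise representation `RMCR = MFCR ∪ MMCR`. -/
def RMCR (T : Finset τ) (items : τ → Finset ι) (I : Finset ι) (minsupp : ℕ) (minbond : ℚ) :
    Set (Finset ι) :=
  MFCR T items I minsupp minbond ∪ MMCR T items I minsupp minbond

lemma suppConj_anti (T : Finset τ) (items : τ → Finset ι) {X Y : Finset ι} (h : X ⊆ Y) :
    suppConj T items Y ≤ suppConj T items X := by
  apply Finset.card_le_card
  intro t ht
  simp only [Finset.mem_filter] at *
  exact ⟨ht.1, h.trans ht.2⟩

lemma suppDisj_mono (T : Finset τ) (items : τ → Finset ι) {X Y : Finset ι} (h : X ⊆ Y) :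
    suppDisj T items X ≤ suppDisj T items Y := by
  apply Finset.card_le_card
  intro t ht
  simp only [Finset.mem_filter] at *
  exact ⟨ht.1, ht.2.mono (Finset.inter_subset_inter h (le_refl _))⟩

lemma bond_pos_supp (T : Finset τ) (items : τ → Finset ι) {X : Finset ι}
    (h : 0 < bond T items X) :
    0 < suppConj T items X ∧ 0 < suppDisj T items X := by
  unfold bond at h
  rcases Nat.eq_zero_or_pos (suppDisj T items X) with hd | hd
  · rw [hd] at h; simp at h
  · refine ⟨?_, hd⟩
    by_contra hc
    push_neg at hc
    interval_cases h' : suppConj T items X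
    simp [h'] at h

lemma bond_anti (T : Finset τ) (items : τ → Finset ι) {X Y : Finset ι} (h : X ⊆ Y)
    (hd : 0 < suppDisj T items X) : bond T items Y ≤ bond T items X := by
  have hd' : 0 < suppDisj T items Y := lt_of_lt_of_le hd (suppDisj_mono T items h)
  unfold bond
  rw [div_le_div_iff₀ (by exact_mod_cast hd') (by exact_mod_cast hd)]
  have h1 : suppConj T items Y ≤ suppConj T items X := suppConj_anti T items h
  have h2 : suppDisj T items X ≤ suppDisj T items Y := suppDisj_mono T items h
  exact_mod_cast Nat.mul_le_mul h1 h2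

/-- A subset with the same (positive) bond has the same conjunctive support. -/
lemma suppConj_eq_of_bond_eq (T : Finset τ) (items : τ → Finset ι) {J X : Finset ι}
    (h : J ⊆ X) (hpos : 0 < bond T items X) (heq : bond T items J = bond T items X) :
    suppConj T items J = suppConj T items X := by
  obtain ⟨hcX, hdX⟩ := bond_pos_supp T items hpos
  obtain ⟨hcJ, hdJ⟩ := bond_pos_supp T items (heq ▸ hpos)
  unfold bond at heq
  rw [div_eq_div_iff (by exact_mod_cast hdJ.ne') (by exact_mod_cast hdX.ne')] at heq
  have heq' : suppConj T items J * suppDisj T items X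
      = suppConj T items X * suppDisj T items J := by exact_mod_cast heq
  have h1 : suppConj T items X ≤ suppConj T items J := suppConj_anti T items h
  have h2 : suppDisj T items J ≤ suppDisj T items X := suppDisj_mono T items h
  have : suppConj T items J * suppDisj T items X
      ≤ suppConj T items X * suppDisj T items X :=
    heq' ▸ Nat.mul_le_mul_left _ h2
  exact le_antisymm (Nat.le_of_mul_le_mul_right this hdX) h1

theorem stmt8 (T : Finset τ) (items : τ → Finset ι) (I : Finset ι)
    (hitems : ∀ t ∈ T, items t ⊆ I)
    (minsupp : ℕ) (minbond : ℚ)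
    (hs : 1 ≤ minsupp) (hb0 : 0 < minbond) (hb1 : minbond ≤ 1)
    (X : Finset ι) (hXI : X ⊆ I) :
    X ∈ MCR T items I minsupp minbond ↔
      ∃ J ∈ RMCR T items I minsupp minbond, ∃ Z ∈ RMCR T items I minsupp minbond,
        J ⊆ X ∧ X ⊆ Z := by
  constructor
  · rintro ⟨hXI', hbX, hcX⟩
    have hbXpos : 0 < bond T items X := lt_of_lt_of_le hb0 hbX
    obtain ⟨hcXpos, hdXpos⟩ := bond_pos_supp T items hbXpos
    -- minimal subset with same bond
    have hSne : (X.powerset.filter (fun J => bond T items J = bond T items X)).Nonempty :=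
      ⟨X, by simp⟩
    obtain ⟨J, hJmem, hJmin⟩ :=
      Finset.exists_min_image _ (fun J => J.card) hSne
    simp only [Finset.mem_filter, Finset.mem_powerset] at hJmem
    obtain ⟨hJX, hJbond⟩ := hJmem
    have hJMCR : J ∈ MCR T items I minsupp minbond := by
      refine ⟨hJX.trans hXI, hJbond ▸ hbX, ?_⟩
      rw [suppConj_eq_of_bond_eq T items hJX hbXpos hJbond]; exact hcX
    have hJ : J ∈ MMCR T items I minsupp minbond := by
      refine ⟨hJMCR, fun Y hYJ hYbond => ?_⟩
      have hYmem : Y ∈ X.powerset.filter (fun J => bond T items J = bond T items X) := by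
        simp only [Finset.mem_filter, Finset.mem_powerset]
        exact ⟨hYJ.subset.trans hJX, hYbond.trans hJbond⟩
      exact absurd (hJmin Y hYmem) (not_le.mpr (Finset.card_lt_card hYJ))
    -- maximal superset (within I) with same bond
    have hSne' : (I.powerset.filter (fun Z => X ⊆ Z ∧ bond T items Z = bond T items X)).Nonempty :=
      ⟨X, by simp [hXI]⟩
    obtain ⟨Z, hZmem, hZmax⟩ :=
      Finset.exists_max_image _ (fun Z => Z.card) hSne'
    simp only [Finset.mem_filter, Finset.mem_powerset] at hZmem
    obtain ⟨hZI, hXZ, hZbond⟩ := hZmem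
    have hZMCR : Z ∈ MCR T items I minsupp minbond := by
      refine ⟨hZI, hZbond ▸ hbX, lt_of_le_of_lt (suppConj_anti T items hXZ) hcX⟩
    have hZ : Z ∈ MFCR T items I minsupp minbond := by
      refine ⟨hZMCR, fun Y hZY hYI hYbond => ?_⟩
      have hYmem : Y ∈ I.powerset.filter (fun Z => X ⊆ Z ∧ bond T items Z = bond T items X) := by
        simp only [Finset.mem_filter, Finset.mem_powerset]
        exact ⟨hYI, hXZ.trans hZY.subset, hYbond.trans hZbond⟩
      exact absurd (hZmax Y hYmem) (not_le.mpr (Finset.card_lt_card hZY))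
    exact ⟨J, Or.inr hJ, Z, Or.inl hZ, hJX, hXZ⟩
  · rintro ⟨J, hJ, Z, hZ, hJX, hXZ⟩
    have hJMCR : J ∈ MCR T items I minsupp minbond := by
      rcases hJ with h | h <;> exact h.1
    have hZMCR : Z ∈ MCR T items I minsupp minbond := by
      rcases hZ with h | h <;> exact h.1
    obtain ⟨_, hbJ, hcJ⟩ := hJMCR
    obtain ⟨_, hbZ, _⟩ := hZMCR
    obtain ⟨_, hdJpos⟩ := bond_pos_supp T items (lt_of_lt_of_le hb0 hbJ)
    have hdX : 0 < suppDisj T items X := lt_of_lt_of_le hdJpos (suppDisj_mono T items hJX)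
    refine ⟨hXI, le_trans hbZ (bond_anti T items hXZ hdX), ?_⟩
    exact lt_of_le_of_lt (suppConj_anti T items hJX) hcJ
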